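/- Let r ≥ 3 and let p(λ) = (λ-1)(λ-2)·(λ^{r-2} - c₁λ^{r-3} + c₂λ^{r-4} - ⋯) be a monic real polynomial of degree r with all roots real, whose expansion Σ b_i λ^i satisfies b_{r-1} = -m and b_{r-2} = C(m,2) - γ for reals m, γ. Then γ ≥ ((m - r)(m - 4) + r - 1)/(2r - 4). -/

import Mathlib

open Polynomial

private lemma esymm_one' (s : Multiset ℝ) : s.esymm 1 = s.sum := by
  simp [Multiset.esymm, Multiset.powersetCard_one, Multiset.map_map]

private lemma esymm_cons (a : ℝ) (s : Multiset ℝ) (n : ℕ) :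
    (a ::ₘ s).esymm (n + 1) = s.esymm (n + 1) + a * s.esymm n := by
  simp only [Multiset.esymm, Multiset.powersetCard_cons, Multiset.map_add, Multiset.sum_add,
    Multiset.map_map]
  congr 1
  have hfun : ((fun x : Multiset ℝ => x.prod) ∘ Multiset.cons a) = fun x => a * x.prod :=
    funext fun x => by simp [Multiset.prod_cons]
  rw [hfun, Multiset.sum_map_mul_left]

private lemma sum_sq_eq (s : Multiset ℝ) :
    s.sum ^ 2 = (s.map (· ^ 2)).sum + 2 * s.esymm 2 := by
  induction s using Multiset.induction with
  | empty => simp [Multiset.esymm, show Multiset.powersetCard 2 (0 : Multiset ℝ) = 0 from Multiset.powersetCard_zero_right 1]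
  | cons a s ih =>
    rw [Multiset.sum_cons, Multiset.map_cons, Multiset.sum_cons,
      show (2 : ℕ) = 1 + 1 from rfl, esymm_cons, esymm_one']
    ring_nf
    ring_nf at ih
    nlinarith [ih]

private lemma cs_ineq (s : Multiset ℝ) :
    s.sum ^ 2 ≤ (Multiset.card s : ℝ) * (s.map (· ^ 2)).sum := by
  induction s using Multiset.induction with
  | empty => simp
  | cons a s ih =>
    rw [Multiset.sum_cons, Multiset.map_cons, Multiset.sum_cons, Multiset.card_cons]
    push_cast
    have hc : (0 : ℝ) ≤ Multiset.card s := by positivity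
    have hQ : (0 : ℝ) ≤ (s.map (· ^ 2)).sum := by
      refine Multiset.sum_nonneg fun x hx => ?_
      obtain ⟨y, _, rfl⟩ := Multiset.mem_map.1 hx
      positivity
    rcases eq_or_lt_of_le hc with h0 | h0
    · have hs2 : s.sum ^ 2 ≤ 0 := by nlinarith [ih, hQ]
      have hs0 : s.sum = 0 := by nlinarith [sq_nonneg s.sum]
      rw [hs0]; nlinarith
    · nlinarith [sq_nonneg ((Multiset.card s : ℝ) * a - s.sum), mul_le_mul_of_nonneg_left ih (le_of_lt h0)]

/-- Abstract form of Lemma 3.3(ii): let `p = (X-1)(X-2) * q` be a monic real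
polynomial of degree `r ≥ 3` with all roots real, whose coefficients satisfy
`b_{r-1} = -m` and `b_{r-2} = C(m,2) - γ`.  Then
`γ ≥ ((m-r)(m-4) + r - 1)/(2r-4)`. -/
theorem stmt_18 (r : ℕ) (hr : 3 ≤ r) (p q : Polynomial ℝ) (m γ : ℝ)
    (hp : p = (X - C 1) * (X - C 2) * q) (hq : q.Monic)
    (hqdeg : q.natDegree = r - 2)
    (hroots : p.roots.card = r)
    (hb1 : p.coeff (r - 1) = -m)
    (hb2 : p.coeff (r - 2) = m * (m - 1) / 2 - γ) :
    γ ≥ ((m - r) * (m - 4) + r - 1) / (2 * r - 4) := by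
  have hm12 : ((X - C 1) * (X - C (2:ℝ))).Monic := (monic_X_sub_C 1).mul (monic_X_sub_C 2)
  have hpm : p.Monic := by rw [hp]; exact hm12.mul hq
  have hpdeg : p.natDegree = r := by
    rw [hp, hm12.natDegree_mul hq, (monic_X_sub_C (1:ℝ)).natDegree_mul (monic_X_sub_C 2),
      natDegree_X_sub_C, natDegree_X_sub_C, hqdeg]
    omega
  have hq0 : q ≠ 0 := hq.ne_zero
  have hrootsp : p.roots = 1 ::ₘ 2 ::ₘ q.roots := by
    rw [hp, roots_mul (by rw [← hp]; exact hpm.ne_zero),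
      roots_mul (mul_ne_zero (X_sub_C_ne_zero 1) (X_sub_C_ne_zero 2)),
      roots_X_sub_C, roots_X_sub_C]
    rw [add_assoc, Multiset.singleton_add, Multiset.singleton_add]
  have hcard : Multiset.card p.roots = p.natDegree := by rw [hpdeg]; exact hroots
  have htcard : (Multiset.card q.roots : ℝ) = (r : ℝ) - 2 := by
    have : Multiset.card p.roots = 2 + Multiset.card q.roots := by
      rw [hrootsp]; simp; ring
    rw [hroots] at this
    have h2 : Multiset.card q.roots = r - 2 := by omega
    rw [h2]; push_cast [Nat.cast_sub (by omega : 2 ≤ r)]; ring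
  -- coefficient r-1 : sum of roots
  have h1le : r - 1 ≤ p.natDegree := by omega
  have hidx1 : p.natDegree - (r - 1) = 1 := by omega
  have hc1 := Polynomial.coeff_eq_esymm_roots_of_card hcard h1le
  rw [hidx1, hpm.leadingCoeff, esymm_one'] at hc1
  have hsum : p.roots.sum = m := by
    rw [hb1] at hc1; nlinarith [hc1]
  -- coefficient r-2 : esymm 2
  have h2le : r - 2 ≤ p.natDegree := by omega
  have hidx2 : p.natDegree - (r - 2) = 2 := by omega
  have hc2 := Polynomial.coeff_eq_esymm_roots_of_card hcard h2le
  rw [hidx2, hpm.leadingCoeff, hb2] at hc2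
  have hes2 : p.roots.esymm 2 = m * (m - 1) / 2 - γ := by nlinarith [hc2]
  -- relate to sum of squares
  have hid := sum_sq_eq p.roots
  rw [hsum, hes2] at hid
  set Q : ℝ := ((q.roots).map (· ^ 2)).sum with hQdef
  have hmapsum : ((p.roots).map (· ^ 2)).sum = 5 + Q := by
    rw [hrootsp]; simp; ring
  rw [hmapsum] at hid
  -- q.roots sum
  have htsum : q.roots.sum = m - 3 := by
    have : p.roots.sum = 1 + 2 + q.roots.sum := by rw [hrootsp]; simp; ring
    rw [hsum] at this; linarith
  -- Cauchy-Schwarz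
  have hcs := cs_ineq q.roots
  rw [htsum, htcard, ← hQdef] at hcs
  -- finish
  have hn1 : (1 : ℝ) ≤ (r : ℝ) - 2 := by
    have : (3 : ℝ) ≤ (r : ℝ) := by exact_mod_cast hr
    linarith
  rw [ge_iff_le, div_le_iff₀ (by linarith : (0:ℝ) < 2 * (r:ℝ) - 4)]
  nlinarith [hid, hcs, hn1]
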